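/- For a matrix Ψ with unit-norm columns and mutual coherence μ, the RIP constant of order s satisfies δ_s ≤ (s−1)μ. -/
import Mathlib


open scoped Classical

/-- `x` is `s`-sparse: at most `s` nonzero entries. -/
def Sparse {d : ℕ} (s : ℕ) (x : Fin d → ℝ) : Prop :=
  (Finset.univ.filter fun i => x i ≠ 0).card ≤ s

/-- Squared Euclidean norm. -/
def sqnorm {p : ℕ} (x : Fin p → ℝ) : ℝ := ∑ i, x i ^ 2

/-- Coherence bound on the RIP constant: δ_s ≤ (s−1)μ, i.e. Ψ satisfies RIP of
order s with constant (s−1)μ. -/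
theorem rip_le_coherence (p d s : ℕ) (hs : 1 ≤ s)
    (Ψ : Matrix (Fin p) (Fin d) ℝ)
    (hcols : ∀ j, ∑ k, Ψ k j ^ 2 = 1)
    (μ : ℝ) (hμ0 : 0 ≤ μ) (hμ : ∀ i j, i ≠ j → |∑ k, Ψ k i * Ψ k j| ≤ μ) :
    ∀ x : Fin d → ℝ, Sparse s x →
      (1 - ((s : ℝ) - 1) * μ) * sqnorm x ≤ sqnorm (Ψ.mulVec x) ∧
      sqnorm (Ψ.mulVec x) ≤ (1 + ((s : ℝ) - 1) * μ) * sqnorm x := by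
  intro x hx
  set G : Fin d → Fin d → ℝ := fun i j => ∑ k, Ψ k i * Ψ k j with hG
  have hGd : ∀ i, G i i = 1 := by
    intro i
    rw [hG]
    simpa [pow_two] using hcols i
  -- expand the quadratic form
  have key : sqnorm (Ψ.mulVec x) = ∑ i, ∑ j, x i * x j * G i j := by
    simp only [sqnorm, Matrix.mulVec, dotProduct, hG]
    have h1 : ∀ k, (∑ i, Ψ k i * x i) ^ 2 = ∑ i, ∑ j, x i * x j * (Ψ k i * Ψ k j) := by
      intro k
      rw [sq, Finset.sum_mul_sum]
      apply Finset.sum_congr rfl; intro i _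
      apply Finset.sum_congr rfl; intro j _
      ring
    simp only [h1]
    rw [Finset.sum_comm]
    apply Finset.sum_congr rfl; intro i _
    rw [Finset.sum_comm]
    apply Finset.sum_congr rfl; intro j _
    rw [Finset.mul_sum]
  set A : ℝ := ∑ i, |x i| with hA
  have hS2 : (0:ℝ) ≤ sqnorm x := Finset.sum_nonneg fun i _ => sq_nonneg _
  -- Cauchy-Schwarz on the support: A^2 ≤ s * sqnorm x
  have hAsq : A ^ 2 ≤ (s : ℝ) * sqnorm x := by
    set T := Finset.univ.filter fun i => x i ≠ 0 with hT
    have hAT : A = ∑ i ∈ T, 1 * |x i| := by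
      rw [hA, hT]
      rw [Finset.sum_filter]
      apply Finset.sum_congr rfl
      intro i _
      by_cases h : x i = 0 <;> simp [h]
    have hsT : sqnorm x = ∑ i ∈ T, |x i| ^ 2 := by
      rw [sqnorm, hT, Finset.sum_filter]
      apply Finset.sum_congr rfl
      intro i _
      by_cases h : x i = 0 <;> simp [h, sq_abs]
    have := Finset.sum_mul_sq_le_sq_mul_sq T (fun _ => (1:ℝ)) (fun i => |x i|)
    rw [← hAT] at this
    simp only [one_pow, Finset.sum_const, nsmul_eq_mul, mul_one] at this
    calc A ^ 2 ≤ (T.card : ℝ) * ∑ i ∈ T, |x i| ^ 2 := this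
      _ ≤ (s : ℝ) * sqnorm x := by
          rw [hsT]
          apply mul_le_mul_of_nonneg_right _ (by positivity)
          exact_mod_cast hx
  -- off-diagonal error term
  set E : ℝ := ∑ i, ∑ j ∈ Finset.univ.erase i, x i * x j * G i j with hE
  have hsplit : sqnorm (Ψ.mulVec x) = sqnorm x + E := by
    rw [key, hE, sqnorm]
    rw [← Finset.sum_add_distrib]
    apply Finset.sum_congr rfl
    intro i _
    rw [← Finset.add_sum_erase _ _ (Finset.mem_univ i), hGd i]
    ring_nf
  have hEbound : |E| ≤ ((s : ℝ) - 1) * μ * sqnorm x := by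
    have h1 : |E| ≤ ∑ i, ∑ j ∈ Finset.univ.erase i, |x i| * |x j| * μ := by
      refine (Finset.abs_sum_le_sum_abs _ _).trans ?_
      apply Finset.sum_le_sum
      intro i _
      refine (Finset.abs_sum_le_sum_abs _ _).trans ?_
      apply Finset.sum_le_sum
      intro j hj
      rw [abs_mul, abs_mul]
      exact mul_le_mul_of_nonneg_left (hμ i j (Ne.symm (Finset.ne_of_mem_erase hj)))
        (mul_nonneg (abs_nonneg _) (abs_nonneg _))
    have h2 : ∑ i, ∑ j ∈ Finset.univ.erase i, |x i| * |x j| * μ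
        = μ * (A ^ 2 - sqnorm x) := by
      have : ∀ i : Fin d, ∑ j ∈ Finset.univ.erase i, |x i| * |x j| * μ
          = μ * (|x i| * (A - |x i|)) := by
        intro i
        have : ∑ j ∈ Finset.univ.erase i, |x j| = A - |x i| := by
          rw [hA, ← Finset.add_sum_erase _ _ (Finset.mem_univ i)]
          ring
        rw [← this, Finset.mul_sum, Finset.mul_sum]
        apply Finset.sum_congr rfl
        intro j _
        ring
      rw [Finset.sum_congr rfl fun i _ => this i]
      rw [← Finset.mul_sum]
      congr 1
      have : ∑ i, |x i| * (A - |x i|) = A * A - ∑ i, |x i| ^ 2 := by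
        simp only [mul_sub, sq]
        rw [Finset.sum_sub_distrib, ← Finset.sum_mul, ← hA]
      rw [this]
      have hxs : ∑ i, |x i| ^ 2 = sqnorm x := by
        rw [sqnorm]; apply Finset.sum_congr rfl; intro i _; rw [sq_abs]
      rw [hxs]; ring
    have h3 : μ * (A ^ 2 - sqnorm x) ≤ μ * (((s : ℝ) - 1) * sqnorm x) := by
      apply mul_le_mul_of_nonneg_left _ hμ0
      nlinarith [hAsq]
    calc |E| ≤ μ * (A ^ 2 - sqnorm x) := by rw [← h2]; exact h1
      _ ≤ μ * (((s : ℝ) - 1) * sqnorm x) := h3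
      _ = ((s : ℝ) - 1) * μ * sqnorm x := by ring
  rw [hsplit]
  rw [abs_le] at hEbound
  constructor <;> nlinarith [hEbound.1, hEbound.2]
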